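/- Let Ω ⊆ ℝ^d be a convex set and let u : Ω → ℝ be any function. Suppose that for every x ∈ Ω there exists a nonzero vector p ∈ ℝ^d such that for every y ∈ Ω with y ≠ x, (y − x) · p ≤ 0 implies u(y) < u(x). Then u is strictly quasiconcave on Ω. -/

import Mathlib

/-- If for every `x ∈ Ω` (convex) there is a nonzero `p` such that for
`y ∈ Ω`, `y ≠ x`, `(y − x) · p ≤ 0 → u(y) < u(x)`, then `u` is strictly quasiconcave
on `Ω`. -/
theorem stmt_4 {d : ℕ} (Ω : Set (EuclideanSpace ℝ (Fin d))) (hΩc : Convex ℝ Ω)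
    (u : EuclideanSpace ℝ (Fin d) → ℝ)
    (h : ∀ x ∈ Ω, ∃ p : EuclideanSpace ℝ (Fin d), p ≠ 0 ∧
      ∀ y ∈ Ω, y ≠ x → (inner ℝ (y - x) p : ℝ) ≤ 0 → u y < u x) :
    ∀ x ∈ Ω, ∀ y ∈ Ω, x ≠ y → ∀ l : ℝ, 0 < l → l < 1 →
      min (u x) (u y) < u (l • x + (1 - l) • y) := by
  intro x hx y hy hxy l hl0 hl1
  set z := l • x + (1 - l) • y with hz
  have hzΩ : z ∈ Ω := hΩc hx hy hl0.le (by linarith) (by ring)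
  obtain ⟨p, hp0, hp⟩ := h z hzΩ
  have hxz : x - z = (1 - l) • (x - y) := by
    simp only [hz]; module
  have hyz : y - z = (-l) • (x - y) := by
    simp only [hz]; module
  have hxyne : x - y ≠ 0 := sub_ne_zero.mpr hxy
  have hxne : x ≠ z := by
    intro hzz
    apply hxyne
    have : x - z = 0 := sub_eq_zero.mpr hzz
    rw [hxz] at this
    exact (smul_eq_zero.mp this).resolve_left (by intro hc; linarith [hc]) 
  have hyne : y ≠ z := by
    intro hzz
    apply hxyne
    have : y - z = 0 := sub_eq_zero.mpr hzz
    rw [hyz] at this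
    exact (smul_eq_zero.mp this).resolve_left (by intro hc; simp at hc; linarith)
  set c : ℝ := inner ℝ (x - y) p with hc
  have hix : (inner ℝ (x - z) p : ℝ) = (1 - l) * c := by
    rw [hxz, real_inner_smul_left]
  have hiy : (inner ℝ (y - z) p : ℝ) = (-l) * c := by
    rw [hyz, real_inner_smul_left]
  rcases le_or_gt c 0 with hcle | hclt
  · have := hp x hx hxne (by rw [hix]; nlinarith)
    exact lt_of_le_of_lt (min_le_left _ _) this
  · have := hp y hy hyne (by rw [hiy]; nlinarith)
    exact lt_of_le_of_lt (min_le_right _ _) this
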